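/- In GP(n,k) with n > 80 and 1 ≤ k < n/2, there exists an 8-cycle using exactly five outer edges, two spokes, and one inner edge if and only if k = 5. -/

import Mathlib

open SimpleGraph
set_option maxHeartbeats 2000000

/-- The generalized Petersen graph `GP(n,k)`: vertices `Sum.inl i = uᵢ` (outer) and
`Sum.inr i = vᵢ` (inner), with edges `uᵢuᵢ₊₁`, `uᵢvᵢ`, `vᵢvᵢ₊ₖ` (indices mod `n`). -/
def GP (n k : ℕ) : SimpleGraph (ZMod n ⊕ ZMod n) :=
  SimpleGraph.fromRel (fun a b => ∃ i : ZMod n,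
    (a = Sum.inl i ∧ b = Sum.inl (i + 1)) ∨
    (a = Sum.inl i ∧ b = Sum.inr i) ∨
    (a = Sum.inr i ∧ b = Sum.inr (i + (k : ZMod n))))

/-- Outer-rim edges `uᵢuᵢ₊₁`. -/
def outerEdges (n : ℕ) : Set (Sym2 (ZMod n ⊕ ZMod n)) :=
  {e | ∃ i : ZMod n, e = s(Sum.inl i, Sum.inl (i + 1))}

/-- Spoke edges `uᵢvᵢ`. -/
def spokeEdges (n : ℕ) : Set (Sym2 (ZMod n ⊕ ZMod n)) :=
  {e | ∃ i : ZMod n, e = s(Sum.inl i, Sum.inr i)}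

/-- Inner-rim edges `vᵢvᵢ₊ₖ`. -/
def innerEdges (n k : ℕ) : Set (Sym2 (ZMod n ⊕ ZMod n)) :=
  {e | ∃ i : ZMod n, e = s(Sum.inr i, Sum.inr (i + (k : ZMod n)))}

/-- The subgraph of `G` spanned by the edges of `G` lying in the edge set `s`. -/
def edgeSubgraph {V : Type*} (G : SimpleGraph V) (s : Set (Sym2 V)) : G.Subgraph where
  verts := {v | ∃ e ∈ s ∩ G.edgeSet, v ∈ e}
  Adj a b := G.Adj a b ∧ s(a, b) ∈ s
  adj_sub h := h.1
  edge_vert {a b} h := ⟨s(a, b), ⟨h.2, (SimpleGraph.mem_edgeSet G).mpr h.1⟩, Sym2.mem_mk_left _ _⟩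
  symm := ⟨fun a b h => ⟨h.1.symm, by rw [Sym2.eq_swap]; exact h.2⟩⟩

/-- `C` is a cycle (subgraph) of length `m`: it has `m` vertices, `m` edges, is connected,
and every one of its vertices has exactly two neighbours in it. -/
def IsNCycle {V : Type*} {G : SimpleGraph V} (m : ℕ) (C : G.Subgraph) : Prop :=
  C.verts.ncard = m ∧ C.edgeSet.ncard = m ∧ C.Connected ∧
    ∀ v ∈ C.verts, (C.neighborSet v).ncard = 2

/-- `sigma8 G e` is the number of 8-cycles of `G` containing the edge `e`. -/
noncomputable def sigma8 {V : Type*} (G : SimpleGraph V) (e : Sym2 V) : ℕ :=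
  {C : G.Subgraph | IsNCycle 8 C ∧ e ∈ C.edgeSet}.ncard


lemma cast_inj_of_lt {n a b : ℕ} (ha : a < n) (hb : b < n) : ((a : ZMod n) = (b : ZMod n)) ↔ a = b := by
  rw [ZMod.natCast_eq_natCast_iff, Nat.ModEq, Nat.mod_eq_of_lt ha, Nat.mod_eq_of_lt hb]

lemma adj_mk_ll {n k : ℕ} {a b : ZMod n} (hne : a ≠ b) (h : b = a + 1) : (GP n k).Adj (.inl a) (.inl b) := by
  rw [GP, fromRel_adj]
  exact ⟨by simp [hne], Or.inl ⟨a, Or.inl ⟨rfl, by rw [h]⟩⟩⟩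

lemma adj_mk_lr {n k : ℕ} (a : ZMod n) : (GP n k).Adj (.inl a) (.inr a) := by
  rw [GP, fromRel_adj]
  exact ⟨by simp, Or.inl ⟨a, Or.inr (Or.inl ⟨rfl, rfl⟩)⟩⟩

lemma adj_mk_rr {n k : ℕ} {a b : ZMod n} (hne : a ≠ b) (h : b = a + (k:ZMod n)) : (GP n k).Adj (.inr a) (.inr b) := by
  rw [GP, fromRel_adj]
  exact ⟨by simp [hne], Or.inl ⟨a, Or.inr (Or.inr ⟨rfl, by rw [h]⟩)⟩⟩

section Construction
variable (n : ℕ)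

def uu (j : ℕ) : ZMod n ⊕ ZMod n := Sum.inl (j : ZMod n)
def vv (j : ℕ) : ZMod n ⊕ ZMod n := Sum.inr (j : ZMod n)

def cycE : Set (Sym2 (ZMod n ⊕ ZMod n)) :=
  {s(uu n 0, uu n 1), s(uu n 1, uu n 2), s(uu n 2, uu n 3), s(uu n 3, uu n 4), s(uu n 4, uu n 5),
   s(uu n 0, vv n 0), s(uu n 5, vv n 5), s(vv n 0, vv n 5)}

lemma hne {a b : ℕ} (ha : a < n) (hb : b < n) (h : a ≠ b) : (a : ZMod n) ≠ (b : ZMod n) := by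
  simpa [cast_inj_of_lt ha hb] using h

variable (hn : 80 < n)

def cyc : (GP n 5).Subgraph where
  verts := {uu n 0, uu n 1, uu n 2, uu n 3, uu n 4, uu n 5, vv n 0, vv n 5}
  Adj a b := s(a, b) ∈ cycE n
  adj_sub := by
    intro a b h
    have h01 := hne n (by omega : (0:ℕ) < n) (by omega : (1:ℕ) < n) (by omega)
    have h12 := hne n (by omega : (1:ℕ) < n) (by omega : (2:ℕ) < n) (by omega)
    have h23 := hne n (by omega : (2:ℕ) < n) (by omega : (3:ℕ) < n) (by omega)
    have h34 := hne n (by omega : (3:ℕ) < n) (by omega : (4:ℕ) < n) (by omega)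
    have h45 := hne n (by omega : (4:ℕ) < n) (by omega : (5:ℕ) < n) (by omega)
    have h05 := hne n (by omega : (0:ℕ) < n) (by omega : (5:ℕ) < n) (by omega)
    simp only [cycE, Set.mem_insert_iff, Set.mem_singleton_iff, Sym2.eq_iff, uu, vv] at h
    rcases h with (⟨h1,h2⟩|⟨h1,h2⟩)|(⟨h1,h2⟩|⟨h1,h2⟩)|(⟨h1,h2⟩|⟨h1,h2⟩)|(⟨h1,h2⟩|⟨h1,h2⟩)|
      (⟨h1,h2⟩|⟨h1,h2⟩)|(⟨h1,h2⟩|⟨h1,h2⟩)|(⟨h1,h2⟩|⟨h1,h2⟩)|(⟨h1,h2⟩|⟨h1,h2⟩) <;>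
      subst h1 <;> subst h2 <;>
      first
        | exact adj_mk_ll (by assumption) (by push_cast; ring)
        | exact (adj_mk_ll (by assumption) (by push_cast; ring)).symm
        | exact adj_mk_lr _
        | exact (adj_mk_lr _).symm
        | exact adj_mk_rr (by assumption) (by push_cast; ring)
        | exact (adj_mk_rr (by assumption) (by push_cast; ring)).symm
  edge_vert := by
    intro a b h
    simp only [cycE, Set.mem_insert_iff, Set.mem_singleton_iff, Sym2.eq_iff] at h
    simp only [Set.mem_insert_iff, Set.mem_singleton_iff]
    rcases h with (⟨h1,h2⟩|⟨h1,h2⟩)|(⟨h1,h2⟩|⟨h1,h2⟩)|(⟨h1,h2⟩|⟨h1,h2⟩)|(⟨h1,h2⟩|⟨h1,h2⟩)|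
      (⟨h1,h2⟩|⟨h1,h2⟩)|(⟨h1,h2⟩|⟨h1,h2⟩)|(⟨h1,h2⟩|⟨h1,h2⟩)|(⟨h1,h2⟩|⟨h1,h2⟩) <;> subst h1 <;> tauto
  symm := by
    constructor
    intro a b h
    rwa [Sym2.eq_swap]
include hn in
lemma dne01 : (0:ZMod n) ≠ 1 := by
  have := hne n (by omega : (0:ℕ) < n) (by omega : (1:ℕ) < n) (by omega)
  exact_mod_cast this

include hn in
lemma dne02 : (0:ZMod n) ≠ 2 := by
  have := hne n (by omega : (0:ℕ) < n) (by omega : (2:ℕ) < n) (by omega)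
  exact_mod_cast this

include hn in
lemma dne03 : (0:ZMod n) ≠ 3 := by
  have := hne n (by omega : (0:ℕ) < n) (by omega : (3:ℕ) < n) (by omega)
  exact_mod_cast this

include hn in
lemma dne04 : (0:ZMod n) ≠ 4 := by
  have := hne n (by omega : (0:ℕ) < n) (by omega : (4:ℕ) < n) (by omega)
  exact_mod_cast this

include hn in
lemma dne05 : (0:ZMod n) ≠ 5 := by
  have := hne n (by omega : (0:ℕ) < n) (by omega : (5:ℕ) < n) (by omega)
  exact_mod_cast this

include hn in
lemma dne12 : (1:ZMod n) ≠ 2 := by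
  have := hne n (by omega : (1:ℕ) < n) (by omega : (2:ℕ) < n) (by omega)
  exact_mod_cast this

include hn in
lemma dne13 : (1:ZMod n) ≠ 3 := by
  have := hne n (by omega : (1:ℕ) < n) (by omega : (3:ℕ) < n) (by omega)
  exact_mod_cast this

include hn in
lemma dne14 : (1:ZMod n) ≠ 4 := by
  have := hne n (by omega : (1:ℕ) < n) (by omega : (4:ℕ) < n) (by omega)
  exact_mod_cast this

include hn in
lemma dne15 : (1:ZMod n) ≠ 5 := by
  have := hne n (by omega : (1:ℕ) < n) (by omega : (5:ℕ) < n) (by omega)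
  exact_mod_cast this

include hn in
lemma dne23 : (2:ZMod n) ≠ 3 := by
  have := hne n (by omega : (2:ℕ) < n) (by omega : (3:ℕ) < n) (by omega)
  exact_mod_cast this

include hn in
lemma dne24 : (2:ZMod n) ≠ 4 := by
  have := hne n (by omega : (2:ℕ) < n) (by omega : (4:ℕ) < n) (by omega)
  exact_mod_cast this

include hn in
lemma dne25 : (2:ZMod n) ≠ 5 := by
  have := hne n (by omega : (2:ℕ) < n) (by omega : (5:ℕ) < n) (by omega)
  exact_mod_cast this

include hn in
lemma dne34 : (3:ZMod n) ≠ 4 := by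
  have := hne n (by omega : (3:ℕ) < n) (by omega : (4:ℕ) < n) (by omega)
  exact_mod_cast this

include hn in
lemma dne35 : (3:ZMod n) ≠ 5 := by
  have := hne n (by omega : (3:ℕ) < n) (by omega : (5:ℕ) < n) (by omega)
  exact_mod_cast this

include hn in
lemma dne45 : (4:ZMod n) ≠ 5 := by
  have := hne n (by omega : (4:ℕ) < n) (by omega : (5:ℕ) < n) (by omega)
  exact_mod_cast this

lemma cyc_edgeSet : (cyc n hn).edgeSet = cycE n := by
  ext e
  induction e using Sym2.ind with
  | _ a b => exact SimpleGraph.Subgraph.mem_edgeSet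

lemma cyc_verts_ncard : (cyc n hn).verts.ncard = 8 := by
  haveI : NeZero n := ⟨by omega⟩
  have d01 := dne01 n hn; have d02 := dne02 n hn; have d03 := dne03 n hn
  have d04 := dne04 n hn; have d05 := dne05 n hn; have d12 := dne12 n hn
  have d13 := dne13 n hn; have d14 := dne14 n hn; have d15 := dne15 n hn
  have d23 := dne23 n hn; have d24 := dne24 n hn; have d25 := dne25 n hn
  have d34 := dne34 n hn; have d35 := dne35 n hn; have d45 := dne45 n hn
  show ({uu n 0, uu n 1, uu n 2, uu n 3, uu n 4, uu n 5, vv n 0, vv n 5} : Set _).ncard = 8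
  rw [Set.ncard_insert_of_notMem (by simp [uu, vv, d01, d02, d03, d04, d05]),
      Set.ncard_insert_of_notMem (by simp [uu, vv, d12, d13, d14, d15]),
      Set.ncard_insert_of_notMem (by simp [uu, vv, d23, d24, d25]),
      Set.ncard_insert_of_notMem (by simp [uu, vv, d34, d35]),
      Set.ncard_insert_of_notMem (by simp [uu, vv, d45]),
      Set.ncard_insert_of_notMem (by simp [uu, vv]),
      Set.ncard_insert_of_notMem (by simp [uu, vv, d05]),
      Set.ncard_singleton]

lemma cyc_deg : ∀ v ∈ (cyc n hn).verts, ((cyc n hn).neighborSet v).ncard = 2 := by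
  have d01 := dne01 n hn; have d02 := dne02 n hn; have d03 := dne03 n hn
  have d04 := dne04 n hn; have d05 := dne05 n hn; have d12 := dne12 n hn
  have d13 := dne13 n hn; have d14 := dne14 n hn; have d15 := dne15 n hn
  have d23 := dne23 n hn; have d24 := dne24 n hn; have d25 := dne25 n hn
  have d34 := dne34 n hn; have d35 := dne35 n hn; have d45 := dne45 n hn
  intro v hv
  rcases hv with rfl|rfl|rfl|rfl|rfl|rfl|rfl|rfl
  · have hset : (cyc n hn).neighborSet (uu n 0) = {uu n 1, vv n 0} := by
      ext w
      simp only [SimpleGraph.Subgraph.mem_neighborSet]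
      show s(uu n 0, w) ∈ cycE n ↔ _
      simp [cycE, Sym2.eq_iff, uu, vv, d01, d02, d03, d04, d05, d12, d13, d14, d15, d23, d24, d25, d34, d35, d45,
        d01.symm, d02.symm, d03.symm, d04.symm, d05.symm, d12.symm, d13.symm, d14.symm, d15.symm, d23.symm, d24.symm, d25.symm, d34.symm, d35.symm, d45.symm]
    rw [hset, Set.ncard_pair (by simp [uu, vv])]
  · have hset : (cyc n hn).neighborSet (uu n 1) = {uu n 0, uu n 2} := by
      ext w
      simp only [SimpleGraph.Subgraph.mem_neighborSet]
      show s(uu n 1, w) ∈ cycE n ↔ _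
      simp [cycE, Sym2.eq_iff, uu, vv, d01, d02, d03, d04, d05, d12, d13, d14, d15, d23, d24, d25, d34, d35, d45,
        d01.symm, d02.symm, d03.symm, d04.symm, d05.symm, d12.symm, d13.symm, d14.symm, d15.symm, d23.symm, d24.symm, d25.symm, d34.symm, d35.symm, d45.symm]
    rw [hset, Set.ncard_pair (by simp [uu, d02])]
  · have hset : (cyc n hn).neighborSet (uu n 2) = {uu n 1, uu n 3} := by
      ext w
      simp only [SimpleGraph.Subgraph.mem_neighborSet]
      show s(uu n 2, w) ∈ cycE n ↔ _
      simp [cycE, Sym2.eq_iff, uu, vv, d01, d02, d03, d04, d05, d12, d13, d14, d15, d23, d24, d25, d34, d35, d45,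
        d01.symm, d02.symm, d03.symm, d04.symm, d05.symm, d12.symm, d13.symm, d14.symm, d15.symm, d23.symm, d24.symm, d25.symm, d34.symm, d35.symm, d45.symm]
    rw [hset, Set.ncard_pair (by simp [uu, d13])]
  · have hset : (cyc n hn).neighborSet (uu n 3) = {uu n 2, uu n 4} := by
      ext w
      simp only [SimpleGraph.Subgraph.mem_neighborSet]
      show s(uu n 3, w) ∈ cycE n ↔ _
      simp [cycE, Sym2.eq_iff, uu, vv, d01, d02, d03, d04, d05, d12, d13, d14, d15, d23, d24, d25, d34, d35, d45,
        d01.symm, d02.symm, d03.symm, d04.symm, d05.symm, d12.symm, d13.symm, d14.symm, d15.symm, d23.symm, d24.symm, d25.symm, d34.symm, d35.symm, d45.symm]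
    rw [hset, Set.ncard_pair (by simp [uu, d24])]
  · have hset : (cyc n hn).neighborSet (uu n 4) = {uu n 3, uu n 5} := by
      ext w
      simp only [SimpleGraph.Subgraph.mem_neighborSet]
      show s(uu n 4, w) ∈ cycE n ↔ _
      simp [cycE, Sym2.eq_iff, uu, vv, d01, d02, d03, d04, d05, d12, d13, d14, d15, d23, d24, d25, d34, d35, d45,
        d01.symm, d02.symm, d03.symm, d04.symm, d05.symm, d12.symm, d13.symm, d14.symm, d15.symm, d23.symm, d24.symm, d25.symm, d34.symm, d35.symm, d45.symm]
    rw [hset, Set.ncard_pair (by simp [uu, d35])]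
  · have hset : (cyc n hn).neighborSet (uu n 5) = {uu n 4, vv n 5} := by
      ext w
      simp only [SimpleGraph.Subgraph.mem_neighborSet]
      show s(uu n 5, w) ∈ cycE n ↔ _
      simp [cycE, Sym2.eq_iff, uu, vv, d01, d02, d03, d04, d05, d12, d13, d14, d15, d23, d24, d25, d34, d35, d45,
        d01.symm, d02.symm, d03.symm, d04.symm, d05.symm, d12.symm, d13.symm, d14.symm, d15.symm, d23.symm, d24.symm, d25.symm, d34.symm, d35.symm, d45.symm]
    rw [hset, Set.ncard_pair (by simp [uu, vv])]
  · have hset : (cyc n hn).neighborSet (vv n 0) = {uu n 0, vv n 5} := by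
      ext w
      simp only [SimpleGraph.Subgraph.mem_neighborSet]
      show s(vv n 0, w) ∈ cycE n ↔ _
      simp [cycE, Sym2.eq_iff, uu, vv, d01, d02, d03, d04, d05, d12, d13, d14, d15, d23, d24, d25, d34, d35, d45,
        d01.symm, d02.symm, d03.symm, d04.symm, d05.symm, d12.symm, d13.symm, d14.symm, d15.symm, d23.symm, d24.symm, d25.symm, d34.symm, d35.symm, d45.symm]
    rw [hset, Set.ncard_pair (by simp [uu, vv])]
  · have hset : (cyc n hn).neighborSet (vv n 5) = {uu n 5, vv n 0} := by
      ext w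
      simp only [SimpleGraph.Subgraph.mem_neighborSet]
      show s(vv n 5, w) ∈ cycE n ↔ _
      simp [cycE, Sym2.eq_iff, uu, vv, d01, d02, d03, d04, d05, d12, d13, d14, d15, d23, d24, d25, d34, d35, d45,
        d01.symm, d02.symm, d03.symm, d04.symm, d05.symm, d12.symm, d13.symm, d14.symm, d15.symm, d23.symm, d24.symm, d25.symm, d34.symm, d35.symm, d45.symm]
    rw [hset, Set.ncard_pair (by simp [uu, vv])]

lemma cyc_conn : (cyc n hn).Connected := by
  have m0 : uu n 0 ∈ (cyc n hn).verts := by left; rfl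
  have m1 : uu n 1 ∈ (cyc n hn).verts := by right; left; rfl
  have m2 : uu n 2 ∈ (cyc n hn).verts := by right; right; left; rfl
  have m3 : uu n 3 ∈ (cyc n hn).verts := by right; right; right; left; rfl
  have m4 : uu n 4 ∈ (cyc n hn).verts := by right; right; right; right; left; rfl
  have m5 : uu n 5 ∈ (cyc n hn).verts := by right; right; right; right; right; left; rfl
  have mv0 : vv n 0 ∈ (cyc n hn).verts := by right; right; right; right; right; right; left; rfl
  have mv5 : vv n 5 ∈ (cyc n hn).verts := by right; right; right; right; right; right; right; rfl
  have step : ∀ (x y : ZMod n ⊕ ZMod n) (hx : x ∈ (cyc n hn).verts) (hy : y ∈ (cyc n hn).verts),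
      s(x, y) ∈ cycE n → (cyc n hn).coe.Reachable ⟨x, hx⟩ ⟨y, hy⟩ := by
    intro x y hx hy h
    exact SimpleGraph.Adj.reachable h
  have r1 := step _ _ m0 m1 (by left; rfl)
  have r2 := (step _ _ m0 m1 (by left; rfl)).trans (step _ _ m1 m2 (by right; left; rfl))
  have r3 := r2.trans (step _ _ m2 m3 (by right; right; left; rfl))
  have r4 := r3.trans (step _ _ m3 m4 (by right; right; right; left; rfl))
  have r5 := r4.trans (step _ _ m4 m5 (by right; right; right; right; left; rfl))
  have rv0 := step _ _ m0 mv0 (by right; right; right; right; right; left; rfl)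
  have rv5 := r5.trans (step _ _ m5 mv5 (by right; right; right; right; right; right; left; rfl))
  have H : ∀ (w : ZMod n ⊕ ZMod n) (hw : w ∈ (cyc n hn).verts),
      (cyc n hn).coe.Reachable ⟨uu n 0, m0⟩ ⟨w, hw⟩ := by
    intro w hw
    rcases hw with rfl|rfl|rfl|rfl|rfl|rfl|rfl|rfl
    · exact SimpleGraph.Reachable.refl _
    · exact r1
    · exact r2
    · exact r3
    · exact r4
    · exact r5
    · exact rv0
    · exact rv5
  rw [SimpleGraph.Subgraph.connected_iff]
  exact ⟨⟨fun a b => (H a.1 a.2).symm.trans (H b.1 b.2)⟩, ⟨uu n 0, m0⟩⟩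

include hn in
lemma outer_count : ((cycE n) ∩ outerEdges n).ncard = 5 := by
  haveI : NeZero n := ⟨by omega⟩
  have d01 := dne01 n hn; have d02 := dne02 n hn; have d03 := dne03 n hn
  have d04 := dne04 n hn; have d05 := dne05 n hn; have d12 := dne12 n hn
  have d13 := dne13 n hn; have d14 := dne14 n hn; have d15 := dne15 n hn
  have d23 := dne23 n hn; have d24 := dne24 n hn; have d25 := dne25 n hn
  have d34 := dne34 n hn; have d35 := dne35 n hn; have d45 := dne45 n hn
  have a01 : (0:ZMod n)+1 = 1 := by norm_num
  have a12 : (1:ZMod n)+1 = 2 := by norm_num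
  have a23 : (2:ZMod n)+1 = 3 := by norm_num
  have a34 : (3:ZMod n)+1 = 4 := by norm_num
  have a45 : (4:ZMod n)+1 = 5 := by norm_num
  have heq : (cycE n) ∩ outerEdges n =
      {s(uu n 0, uu n 1), s(uu n 1, uu n 2), s(uu n 2, uu n 3), s(uu n 3, uu n 4), s(uu n 4, uu n 5)} := by
    ext e
    constructor
    · rintro ⟨he, i, rfl⟩
      rcases he with he|he|he|he|he|he|he|he <;>
        simp_all [uu, vv, Sym2.eq_iff] <;> tauto
    · rintro (rfl|rfl|rfl|rfl|rfl) <;>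
        refine ⟨by tauto, ?_⟩
      · exact ⟨(0:ℕ), by simp [uu, Sym2.eq_iff, a01, a12, a23, a34, a45]⟩
      · exact ⟨(1:ℕ), by simp [uu, Sym2.eq_iff, a01, a12, a23, a34, a45]⟩
      · exact ⟨(2:ℕ), by simp [uu, Sym2.eq_iff, a01, a12, a23, a34, a45]⟩
      · exact ⟨(3:ℕ), by simp [uu, Sym2.eq_iff, a01, a12, a23, a34, a45]⟩
      · exact ⟨(4:ℕ), by simp [uu, Sym2.eq_iff, a01, a12, a23, a34, a45]⟩
  rw [heq,
    Set.ncard_insert_of_notMem (by simp [uu, Sym2.eq_iff, d01, d02, d12, d13, d23, d34, d01.symm, d02.symm, d12.symm, d13.symm, d23.symm, d34.symm, d03, d14, d25, d04, d15, d24, d35, d45, d05]),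
    Set.ncard_insert_of_notMem (by simp [uu, Sym2.eq_iff, d01, d02, d12, d13, d23, d34, d01.symm, d02.symm, d12.symm, d13.symm, d23.symm, d34.symm, d03, d14, d25, d04, d15, d24, d35, d45, d05]),
    Set.ncard_insert_of_notMem (by simp [uu, Sym2.eq_iff, d01, d02, d12, d13, d23, d34, d01.symm, d02.symm, d12.symm, d13.symm, d23.symm, d34.symm, d03, d14, d25, d04, d15, d24, d35, d45, d05]),
    Set.ncard_insert_of_notMem (by simp [uu, Sym2.eq_iff, d01, d02, d12, d13, d23, d34, d01.symm, d02.symm, d12.symm, d13.symm, d23.symm, d34.symm, d03, d14, d25, d04, d15, d24, d35, d45, d05]),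
    Set.ncard_singleton]

include hn in
lemma spoke_count : ((cycE n) ∩ spokeEdges n).ncard = 2 := by
  haveI : NeZero n := ⟨by omega⟩
  have d01 := dne01 n hn; have d02 := dne02 n hn; have d03 := dne03 n hn
  have d04 := dne04 n hn; have d05 := dne05 n hn; have d12 := dne12 n hn
  have d13 := dne13 n hn; have d14 := dne14 n hn; have d15 := dne15 n hn
  have d23 := dne23 n hn; have d24 := dne24 n hn; have d25 := dne25 n hn
  have d34 := dne34 n hn; have d35 := dne35 n hn; have d45 := dne45 n hn
  have heq : (cycE n) ∩ spokeEdges n = {s(uu n 0, vv n 0), s(uu n 5, vv n 5)} := by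
    ext e
    constructor
    · rintro ⟨he, i, rfl⟩
      rcases he with he|he|he|he|he|he|he|he <;>
        simp_all [uu, vv, Sym2.eq_iff] <;> tauto
    · rintro (rfl|rfl)
      · exact ⟨by tauto, ⟨(0:ℕ), by simp [uu, vv, Sym2.eq_iff]⟩⟩
      · exact ⟨by tauto, ⟨(5:ℕ), by simp [uu, vv, Sym2.eq_iff]⟩⟩
  rw [heq, Set.ncard_pair (by simp [uu, vv, Sym2.eq_iff, d01, d02, d03, d04, d05, d12, d13, d14, d15, d23, d24, d25, d34, d35, d45, d01.symm, d02.symm, d03.symm, d04.symm, d05.symm, d12.symm, d13.symm, d14.symm, d15.symm, d23.symm, d24.symm, d25.symm, d34.symm, d35.symm, d45.symm])]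

include hn in
lemma inner_count : ((cycE n) ∩ innerEdges n 5).ncard = 1 := by
  haveI : NeZero n := ⟨by omega⟩
  have d01 := dne01 n hn; have d02 := dne02 n hn; have d03 := dne03 n hn
  have d04 := dne04 n hn; have d05 := dne05 n hn; have d12 := dne12 n hn
  have d13 := dne13 n hn; have d14 := dne14 n hn; have d15 := dne15 n hn
  have d23 := dne23 n hn; have d24 := dne24 n hn; have d25 := dne25 n hn
  have d34 := dne34 n hn; have d35 := dne35 n hn; have d45 := dne45 n hn
  have heq : (cycE n) ∩ innerEdges n 5 = {s(vv n 0, vv n 5)} := by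
    ext e
    constructor
    · rintro ⟨he, i, rfl⟩
      rcases he with he|he|he|he|he|he|he|he <;>
        simp_all [uu, vv, Sym2.eq_iff] <;> tauto
    · rintro rfl
      refine ⟨by tauto, ⟨(0:ℕ), ?_⟩⟩
      have : ((0:ℕ):ZMod n) + ((5:ℕ):ZMod n) = ((5:ℕ):ZMod n) := by push_cast; ring
      simp [uu, vv, Sym2.eq_iff, this]
  rw [heq, Set.ncard_singleton]

include hn in
lemma cycE_ncard : (cycE n).ncard = 8 := by
  haveI : NeZero n := ⟨by omega⟩
  have d01 := dne01 n hn; have d02 := dne02 n hn; have d03 := dne03 n hn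
  have d04 := dne04 n hn; have d05 := dne05 n hn; have d12 := dne12 n hn
  have d13 := dne13 n hn; have d14 := dne14 n hn; have d15 := dne15 n hn
  have d23 := dne23 n hn; have d24 := dne24 n hn; have d25 := dne25 n hn
  have d34 := dne34 n hn; have d35 := dne35 n hn; have d45 := dne45 n hn
  show ({s(uu n 0, uu n 1), s(uu n 1, uu n 2), s(uu n 2, uu n 3), s(uu n 3, uu n 4), s(uu n 4, uu n 5),
   s(uu n 0, vv n 0), s(uu n 5, vv n 5), s(vv n 0, vv n 5)} : Set _).ncard = 8
  rw [Set.ncard_insert_of_notMem (by simp [uu, vv, Sym2.eq_iff, d01, d02, d03, d04, d05, d12, d13, d14, d15, d23, d24, d25, d34, d35, d45, d01.symm, d02.symm, d03.symm, d04.symm, d05.symm, d12.symm, d13.symm, d14.symm, d15.symm, d23.symm, d24.symm, d25.symm, d34.symm, d35.symm, d45.symm]),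
    Set.ncard_insert_of_notMem (by simp [uu, vv, Sym2.eq_iff, d01, d02, d03, d04, d05, d12, d13, d14, d15, d23, d24, d25, d34, d35, d45, d01.symm, d02.symm, d03.symm, d04.symm, d05.symm, d12.symm, d13.symm, d14.symm, d15.symm, d23.symm, d24.symm, d25.symm, d34.symm, d35.symm, d45.symm]),
    Set.ncard_insert_of_notMem (by simp [uu, vv, Sym2.eq_iff, d01, d02, d03, d04, d05, d12, d13, d14, d15, d23, d24, d25, d34, d35, d45, d01.symm, d02.symm, d03.symm, d04.symm, d05.symm, d12.symm, d13.symm, d14.symm, d15.symm, d23.symm, d24.symm, d25.symm, d34.symm, d35.symm, d45.symm]),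
    Set.ncard_insert_of_notMem (by simp [uu, vv, Sym2.eq_iff, d01, d02, d03, d04, d05, d12, d13, d14, d15, d23, d24, d25, d34, d35, d45, d01.symm, d02.symm, d03.symm, d04.symm, d05.symm, d12.symm, d13.symm, d14.symm, d15.symm, d23.symm, d24.symm, d25.symm, d34.symm, d35.symm, d45.symm]),
    Set.ncard_insert_of_notMem (by simp [uu, vv, Sym2.eq_iff, d01, d02, d03, d04, d05, d12, d13, d14, d15, d23, d24, d25, d34, d35, d45, d01.symm, d02.symm, d03.symm, d04.symm, d05.symm, d12.symm, d13.symm, d14.symm, d15.symm, d23.symm, d24.symm, d25.symm, d34.symm, d35.symm, d45.symm]),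
    Set.ncard_insert_of_notMem (by simp [uu, vv, Sym2.eq_iff, d01, d02, d03, d04, d05, d12, d13, d14, d15, d23, d24, d25, d34, d35, d45, d01.symm, d02.symm, d03.symm, d04.symm, d05.symm, d12.symm, d13.symm, d14.symm, d15.symm, d23.symm, d24.symm, d25.symm, d34.symm, d35.symm, d45.symm]),
    Set.ncard_insert_of_notMem (by simp [uu, vv, Sym2.eq_iff, d01, d02, d03, d04, d05, d12, d13, d14, d15, d23, d24, d25, d34, d35, d45, d01.symm, d02.symm, d03.symm, d04.symm, d05.symm, d12.symm, d13.symm, d14.symm, d15.symm, d23.symm, d24.symm, d25.symm, d34.symm, d35.symm, d45.symm]),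
    Set.ncard_singleton]

end Construction

lemma adj_ll {n k : ℕ} {a b : ZMod n} (h : (GP n k).Adj (.inl a) (.inl b)) : b = a + 1 ∨ a = b + 1 := by
  rw [GP, fromRel_adj] at h
  obtain ⟨-, h⟩ := h
  rcases h with ⟨i, h⟩ | ⟨i, h⟩ <;> simp_all

lemma adj_lr {n k : ℕ} {a b : ZMod n} (h : (GP n k).Adj (.inl a) (.inr b)) : a = b := by
  rw [GP, fromRel_adj] at h
  obtain ⟨-, h⟩ := h
  rcases h with ⟨i, h⟩ | ⟨i, h⟩ <;> simp_all

lemma adj_rr {n k : ℕ} {a b : ZMod n} (h : (GP n k).Adj (.inr a) (.inr b)) : b = a + (k:ZMod n) ∨ a = b + (k:ZMod n) := by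
  rw [GP, fromRel_adj] at h
  obtain ⟨-, h⟩ := h
  rcases h with ⟨i, h⟩ | ⟨i, h⟩ <;> simp_all

lemma forward {n k : ℕ} (hn : 80 < n) (hk1 : 1 ≤ k) (hk2 : 2 * k < n)
    (C : (GP n k).Subgraph)
    (hv8 : C.verts.ncard = 8) (he8 : C.edgeSet.ncard = 8)
    (hdeg : ∀ v ∈ C.verts, (C.neighborSet v).ncard = 2)
    (ho : (C.edgeSet ∩ outerEdges n).ncard = 5)
    (hs : (C.edgeSet ∩ spokeEdges n).ncard = 2)
    (hi : (C.edgeSet ∩ innerEdges n k).ncard = 1) : k = 5 := by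
  haveI : NeZero n := ⟨by omega⟩
  -- cast facts
  have hk0 : (k : ZMod n) ≠ 0 := by
    have := hne n (by omega : k < n) (by omega : 0 < n) (by omega)
    simpa using this
  have h2k : (k : ZMod n) + (k : ZMod n) ≠ 0 := by
    have := hne n (by omega : k + k < n) (by omega : 0 < n) (by omega)
    push_cast at this
    simpa using this
  have h2 : (1 : ZMod n) + 1 ≠ 0 := by
    have := hne n (by omega : 2 < n) (by omega : 0 < n) (by omega)
    push_cast at this
    simpa [one_add_one_eq_two] using this
  -- the unique inner edge
  rw [Set.ncard_eq_one] at hi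
  obtain ⟨e0, he0⟩ := hi
  have he0mem : e0 ∈ C.edgeSet ∩ innerEdges n k := he0 ▸ rfl
  obtain ⟨he0C, i, rfl⟩ := he0mem
  have hadj0 : C.Adj (.inr i) (.inr (i + k)) := SimpleGraph.Subgraph.mem_edgeSet.mp he0C
  have hik : i ≠ i + (k : ZMod n) := by
    intro h
    exact hk0 (left_eq_add.mp h)
  -- no other inner edges
  have hinner : ∀ a : ZMod n, s(Sum.inr a, Sum.inr (a + k)) ∈ C.edgeSet →
      (a = i ∧ True) ∨ (a = i + k ∧ a + k = i) := by
    intro a ha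
    have : s(Sum.inr a, Sum.inr (a + (k:ZMod n))) ∈ C.edgeSet ∩ innerEdges n k := ⟨ha, ⟨a, rfl⟩⟩
    rw [he0] at this
    rcases Sym2.eq_iff.mp this with ⟨h1, h2⟩ | ⟨h1, h2⟩
    · exact Or.inl ⟨Sum.inr.inj h1, trivial⟩
    · exact Or.inr ⟨Sum.inr.inj h1, Sum.inr.inj h2⟩
  -- classification of neighbours of inner vertices
  have hnbr : ∀ (a : ZMod n) (w : ZMod n ⊕ ZMod n), C.Adj (.inr a) w →
      w = Sum.inl a ∨ (a = i ∧ w = Sum.inr (i + k)) ∨ (a = i + (k:ZMod n) ∧ w = Sum.inr i) := by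
    intro a w hw
    match w with
    | .inl b =>
      have hb : b = a := adj_lr ((C.adj_sub hw).symm)
      subst hb; left; rfl
    | .inr b =>
      have hmem : s(Sum.inr a, Sum.inr b) ∈ C.edgeSet ∩ innerEdges n k := by
        refine ⟨SimpleGraph.Subgraph.mem_edgeSet.mpr hw, ?_⟩
        rcases adj_rr (C.adj_sub hw) with hb | hb
        · exact ⟨a, by rw [hb]⟩
        · exact ⟨b, by rw [hb, Sym2.eq_swap]⟩
      rw [he0] at hmem
      rcases Sym2.eq_iff.mp hmem with ⟨h1, h2⟩ | ⟨h1, h2⟩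
      · exact Or.inr (Or.inl ⟨Sum.inr.inj h1, by rw [Sum.inr.inj h2]⟩)
      · exact Or.inr (Or.inr ⟨Sum.inr.inj h1, by rw [Sum.inr.inj h2]⟩)
  -- the two spokes
  have spoke1 : C.Adj (.inr i) (.inl i) := by
    have hva : Sum.inr i ∈ C.verts := C.edge_vert hadj0
    have hsub : C.neighborSet (.inr i) ⊆ {Sum.inl i, Sum.inr (i + k)} := by
      intro w hw
      rcases hnbr i w hw with rfl | ⟨-, rfl⟩ | ⟨hc, -⟩
      · left; rfl
      · right; rfl
      · exact absurd hc.symm hik.symm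
    have hcard : ({Sum.inl i, Sum.inr (i + (k:ZMod n))} : Set (ZMod n ⊕ ZMod n)).ncard = 2 :=
      Set.ncard_pair (by simp)
    have := Set.eq_of_subset_of_ncard_le hsub (by rw [hcard, hdeg _ hva])
    have : Sum.inl i ∈ C.neighborSet (.inr i) := by rw [this]; left; rfl
    exact this
  have spoke2 : C.Adj (.inr (i + k)) (.inl (i + k)) := by
    have hva : Sum.inr (i + (k:ZMod n)) ∈ C.verts := C.edge_vert hadj0.symm
    have hsub : C.neighborSet (.inr (i + k)) ⊆ {Sum.inl (i + (k:ZMod n)), Sum.inr i} := by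
      intro w hw
      rcases hnbr (i + k) w hw with rfl | ⟨hc, -⟩ | ⟨-, rfl⟩
      · left; rfl
      · exact absurd hc hik.symm
      · right; rfl
    have hcard : ({Sum.inl (i + (k:ZMod n)), Sum.inr i} : Set (ZMod n ⊕ ZMod n)).ncard = 2 :=
      Set.ncard_pair (by simp)
    have := Set.eq_of_subset_of_ncard_le hsub (by rw [hcard, hdeg _ hva])
    have : Sum.inl (i + (k:ZMod n)) ∈ C.neighborSet (.inr (i + k)) := by rw [this]; left; rfl
    exact this
  -- the spoke edges of C are exactly these two
  have hSp : C.edgeSet ∩ spokeEdges n =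
      {s(Sum.inl i, Sum.inr i), s(Sum.inl (i + (k:ZMod n)), Sum.inr (i + k))} := by
    symm
    apply Set.eq_of_subset_of_ncard_le
    · rintro e (rfl | rfl)
      · exact ⟨SimpleGraph.Subgraph.mem_edgeSet.mpr spoke1.symm, ⟨i, rfl⟩⟩
      · exact ⟨SimpleGraph.Subgraph.mem_edgeSet.mpr spoke2.symm, ⟨i + k, rfl⟩⟩
    · rw [hs, Set.ncard_pair (by simp [Sym2.eq_iff, hik])]
    · exact Set.toFinite _
  -- inner vertices of C are exactly i and i+k
  have hVin : {j : ZMod n | Sum.inr j ∈ C.verts} = {i, i + (k:ZMod n)} := by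
    apply Set.Subset.antisymm
    · intro j hj
      have h2j := hdeg _ hj
      have hne' : (C.neighborSet (Sum.inr j)).Nonempty := by
        rw [← Set.ncard_pos (Set.toFinite _)] at *
        omega
      obtain ⟨w, hw⟩ := hne'
      rcases hnbr j w hw with rfl | ⟨rfl, -⟩ | ⟨rfl, -⟩
      · -- spoke at j, hence j ∈ {i, i+k}
        have : s(Sum.inl j, Sum.inr j) ∈ C.edgeSet ∩ spokeEdges n :=
          ⟨SimpleGraph.Subgraph.mem_edgeSet.mpr hw.symm, ⟨j, rfl⟩⟩
        rw [hSp] at this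
        rcases this with h | h <;>
          rcases Sym2.eq_iff.mp h with ⟨h1, h2⟩ | ⟨h1, h2⟩ <;> simp_all
      · left; rfl
      · right; rfl
    · rintro j (rfl | rfl)
      · exact C.edge_vert hadj0
      · exact C.edge_vert hadj0.symm
  -- outer edge indices
  set S : Set (ZMod n) := {a | s(Sum.inl a, Sum.inl (a + 1)) ∈ C.edgeSet} with hSdef
  have hfinj : Function.Injective (fun a : ZMod n => s((Sum.inl a : ZMod n ⊕ ZMod n), Sum.inl (a + 1))) := by
    intro a b hab
    rcases Sym2.eq_iff.mp hab with ⟨ha1, -⟩ | ⟨ha1, ha2⟩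
    · exact Sum.inl.inj ha1
    · exfalso
      have h1' : a = b + 1 := Sum.inl.inj ha1
      have h2' : b = a + 1 := Sum.inl.inj ha2.symm
      rw [h2', add_assoc] at h1'
      exact h2 (left_eq_add.mp h1')
  have hSim : C.edgeSet ∩ outerEdges n = (fun a : ZMod n => s((Sum.inl a : ZMod n ⊕ ZMod n), Sum.inl (a + 1))) '' S := by
    ext e
    constructor
    · rintro ⟨hc, a, rfl⟩
      exact ⟨a, hc, rfl⟩
    · rintro ⟨a, ha, rfl⟩
      exact ⟨ha, ⟨a, rfl⟩⟩
  have hS5 : S.ncard = 5 := by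
    rw [hSim, Set.ncard_image_of_injective _ hfinj] at ho
    exact ho
  -- outer vertices
  have hT6 : {a : ZMod n | Sum.inl a ∈ C.verts}.ncard = 6 := by
    have hverts : C.verts = (Sum.inl '' {a : ZMod n | Sum.inl a ∈ C.verts}) ∪
        (Sum.inr '' {j : ZMod n | Sum.inr j ∈ C.verts}) := by
      ext w
      cases w with
      | inl a => simp
      | inr a => simp
    rw [hverts, Set.ncard_union_eq (by simp [Set.disjoint_left]) (Set.toFinite _) (Set.toFinite _),
        Set.ncard_image_of_injective _ Sum.inl_injective,
        Set.ncard_image_of_injective _ Sum.inr_injective, hVin,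
        Set.ncard_pair hik] at hv8
    omega
  have hTsub : ∀ a : ZMod n, Sum.inl a ∈ C.verts → a ∈ S ∨ ∃ b ∈ S, a = b + 1 := by
    intro a ha
    by_contra hcon
    push_neg at hcon
    obtain ⟨hc1, hc2⟩ := hcon
    have hsub : C.neighborSet (Sum.inl a) ⊆ {Sum.inr a} := by
      intro w hw
      match w with
      | .inl b =>
        exfalso
        rcases adj_ll (C.adj_sub hw) with hb | hb
        · apply hc1
          show s(Sum.inl a, Sum.inl (a+1)) ∈ C.edgeSet
          rw [← hb]
          exact SimpleGraph.Subgraph.mem_edgeSet.mpr hw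
        · refine hc2 b ?_ hb
          show s(Sum.inl b, Sum.inl (b+1)) ∈ C.edgeSet
          rw [← hb]
          exact SimpleGraph.Subgraph.mem_edgeSet.mpr hw.symm
      | .inr b =>
        have hb : a = b := adj_lr (C.adj_sub hw)
        subst hb; rfl
    have hle := Set.ncard_le_ncard hsub (Set.toFinite _)
    rw [hdeg _ ha, Set.ncard_singleton] at hle
    omega
  have hST : ∀ a ∈ S, Sum.inl a ∈ C.verts ∧ Sum.inl (a + 1) ∈ C.verts := by
    intro a ha
    have := SimpleGraph.Subgraph.mem_edgeSet.mp (by rw [hSdef] at ha; exact ha)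
    exact ⟨C.edge_vert this, C.edge_vert this.symm⟩
  have hTeq : {a : ZMod n | Sum.inl a ∈ C.verts} = S ∪ (fun a => a + 1) '' S := by
    apply Set.Subset.antisymm
    · intro a ha
      rcases hTsub a ha with h | ⟨b, hb, rfl⟩
      · exact Or.inl h
      · exact Or.inr ⟨b, hb, rfl⟩
    · rintro a (ha | ⟨b, hb, rfl⟩)
      · exact (hST a ha).1
      · exact (hST b hb).2
  -- (S+1) \ S is a singleton
  have hdiff : (((fun a : ZMod n => a + 1) '' S) \ S).ncard = 1 := by
    have he' : {a : ZMod n | Sum.inl a ∈ C.verts} = S ∪ (((fun a : ZMod n => a + 1) '' S) \ S) := by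
      rw [hTeq, Set.union_diff_self]
    rw [he', Set.ncard_union_eq Set.disjoint_sdiff_right (Set.toFinite _) (Set.toFinite _), hS5] at hT6
    omega
  obtain ⟨d, hd⟩ := Set.ncard_eq_one.mp hdiff
  have hdS' : d ∈ ((fun a : ZMod n => a + 1) '' S) \ S := hd ▸ rfl
  have hdnot : d ∉ S := hdS'.2
  have hclose : ∀ s ∈ S, s + 1 ∈ S ∨ s = d - 1 := by
    intro s hs
    by_cases hc : s + 1 ∈ S
    · exact Or.inl hc
    · right
      have hmem : s + 1 ∈ ((fun a : ZMod n => a + 1) '' S) \ S := ⟨⟨s, hs, rfl⟩, hc⟩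
      rw [hd] at hmem
      have : s + 1 = d := hmem
      linear_combination this
  -- S is an arc of 5 consecutive indices ending at d-1
  have hchain : ∀ s ∈ S, s = d-1 ∨ s = d-2 ∨ s = d-3 ∨ s = d-4 ∨ s = d-5 := by
    intro s hs
    by_contra hcon
    push_neg at hcon
    obtain ⟨c1, c2, c3, c4, c5⟩ := hcon
    have m1 : s + 1 ∈ S := (hclose s hs).resolve_right c1
    have m2 : s + 1 + 1 ∈ S := (hclose _ m1).resolve_right (fun h => c2 (by linear_combination h))
    have m3 : s + 1 + 1 + 1 ∈ S := (hclose _ m2).resolve_right (fun h => c3 (by linear_combination h))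
    have m4 : s + 1 + 1 + 1 + 1 ∈ S := (hclose _ m3).resolve_right (fun h => c4 (by linear_combination h))
    have m5 : s + 1 + 1 + 1 + 1 + 1 ∈ S := (hclose _ m4).resolve_right (fun h => c5 (by linear_combination h))
    have hsub6 : (fun m : ℕ => s + (m : ZMod n)) '' {0, 1, 2, 3, 4, 5} ⊆ S := by
      rintro x ⟨m, hm, rfl⟩
      rcases hm with rfl|rfl|rfl|rfl|rfl|rfl
      · simpa using hs
      · show s + ((1:ℕ) : ZMod n) ∈ S
        have e : s + ((1:ℕ) : ZMod n) = s + 1 := by push_cast; ring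
        rw [e]; exact m1
      · show s + ((2:ℕ) : ZMod n) ∈ S
        have e : s + ((2:ℕ) : ZMod n) = s + 1 + 1 := by push_cast; ring
        rw [e]; exact m2
      · show s + ((3:ℕ) : ZMod n) ∈ S
        have e : s + ((3:ℕ) : ZMod n) = s + 1 + 1 + 1 := by push_cast; ring
        rw [e]; exact m3
      · show s + ((4:ℕ) : ZMod n) ∈ S
        have e : s + ((4:ℕ) : ZMod n) = s + 1 + 1 + 1 + 1 := by push_cast; ring
        rw [e]; exact m4
      · show s + ((5:ℕ) : ZMod n) ∈ S
        have e : s + ((5:ℕ) : ZMod n) = s + 1 + 1 + 1 + 1 + 1 := by push_cast; ring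
        rw [e]; exact m5
    have hinj6 : Set.InjOn (fun m : ℕ => s + (m : ZMod n)) {0, 1, 2, 3, 4, 5} := by
      intro a ha b hb hab
      have ha' : a < n := by
        rcases ha with rfl|rfl|rfl|rfl|rfl|rfl <;> omega
      have hb' : b < n := by
        rcases hb with rfl|rfl|rfl|rfl|rfl|rfl <;> omega
      have : (a : ZMod n) = (b : ZMod n) := by
        have := hab
        simp only at this
        exact add_left_cancel this
      exact (cast_inj_of_lt ha' hb').mp this
    have h66 : ((fun m : ℕ => s + (m : ZMod n)) '' {0, 1, 2, 3, 4, 5}).ncard = 6 := by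
      rw [Set.ncard_image_of_injOn hinj6]
      rw [Set.ncard_insert_of_notMem (by norm_num), Set.ncard_insert_of_notMem (by norm_num),
        Set.ncard_insert_of_notMem (by norm_num), Set.ncard_insert_of_notMem (by norm_num),
        Set.ncard_insert_of_notMem (by norm_num), Set.ncard_singleton]
    have hle := Set.ncard_le_ncard hsub6 (Set.toFinite _)
    rw [h66, hS5] at hle
    omega
  have hSeq : S = {d-1, d-2, d-3, d-4, d-5} := by
    have d12 := dne12 n hn
    have d13 := dne13 n hn
    have d14 := dne14 n hn
    have d15 := dne15 n hn
    have d23 := dne23 n hn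
    have d24 := dne24 n hn
    have d25 := dne25 n hn
    have d34 := dne34 n hn
    have d35 := dne35 n hn
    have d45 := dne45 n hn
    apply Set.eq_of_subset_of_ncard_le
    · intro x hx
      rcases hchain x hx with rfl|rfl|rfl|rfl|rfl
      · left; rfl
      · right; left; rfl
      · right; right; left; rfl
      · right; right; right; left; rfl
      · right; right; right; right; rfl
    · rw [hS5]
      rw [Set.ncard_insert_of_notMem (by simp [sub_right_inj, d12, d13, d14, d15]),
        Set.ncard_insert_of_notMem (by simp [sub_right_inj, d23, d24, d25]),
        Set.ncard_insert_of_notMem (by simp [sub_right_inj, d34, d35]),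
        Set.ncard_pair (by simp [sub_right_inj, d45])]
    · exact Set.toFinite _
  -- a vertex carrying a spoke has at most one outer edge
  have hspoke_vertex : ∀ a : ZMod n, C.Adj (.inl a) (.inr a) → ¬(a ∈ S ∧ a - 1 ∈ S) := by
    rintro a hasp ⟨hin1, hin2⟩
    have hav : Sum.inl a ∈ C.verts := C.edge_vert hasp
    have ha1 : C.Adj (.inl a) (.inl (a+1)) := SimpleGraph.Subgraph.mem_edgeSet.mp hin1
    have ha2 : C.Adj (.inl a) (.inl (a-1)) := by
      have h' := SimpleGraph.Subgraph.mem_edgeSet.mp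
        (show s(Sum.inl (a-1), Sum.inl (a-1+1)) ∈ C.edgeSet from hin2)
      have e : a - 1 + 1 = a := by ring
      rw [e] at h'
      exact h'.symm
    have hsub3 : ({Sum.inl (a+1), Sum.inl (a-1), Sum.inr a} : Set (ZMod n ⊕ ZMod n)) ⊆
        C.neighborSet (.inl a) := by
      rintro w (rfl | rfl | rfl)
      exacts [ha1, ha2, hasp]
    have hcard3 : ({Sum.inl (a+1), Sum.inl (a-1), Sum.inr a} : Set (ZMod n ⊕ ZMod n)).ncard = 3 := by
      have hne1 : a + 1 ≠ a - 1 := fun h => h2 (by linear_combination h)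
      rw [Set.ncard_insert_of_notMem (by simp [hne1]), Set.ncard_pair (by simp)]
    have hle := Set.ncard_le_ncard hsub3 (Set.toFinite _)
    rw [hcard3, hdeg _ hav] at hle
    omega
  -- spoke endpoints are the two ends of the arc
  have hloc : ∀ a : ZMod n, C.Adj (.inl a) (.inr a) → a = d - 5 ∨ a = d := by
    intro a hasp
    have haT : Sum.inl a ∈ C.verts := C.edge_vert hasp
    have hnot := hspoke_vertex a hasp
    rcases hTsub a haT with haS | ⟨b, hbS, rfl⟩
    · rw [hSeq] at haS
      rcases haS with rfl|rfl|rfl|rfl|rfl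
      · exfalso
        refine hnot ⟨by rw [hSeq]; left; rfl, ?_⟩
        rw [hSeq]
        have e : d - 1 - 1 = d - 2 := by ring
        rw [e]; right; left; rfl
      · exfalso
        refine hnot ⟨by rw [hSeq]; right; left; rfl, ?_⟩
        rw [hSeq]
        have e : d - 2 - 1 = d - 3 := by ring
        rw [e]; right; right; left; rfl
      · exfalso
        refine hnot ⟨by rw [hSeq]; right; right; left; rfl, ?_⟩
        rw [hSeq]
        have e : d - 3 - 1 = d - 4 := by ring
        rw [e]; right; right; right; left; rfl
      · exfalso
        refine hnot ⟨by rw [hSeq]; right; right; right; left; rfl, ?_⟩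
        rw [hSeq]
        have e : d - 4 - 1 = d - 5 := by ring
        rw [e]; right; right; right; right; rfl
      · left; rfl
    · rw [hSeq] at hbS
      rcases hbS with rfl|rfl|rfl|rfl|rfl
      · right; linear_combination (0 : ZMod n)
      · exfalso
        apply hnot
        constructor
        · rw [hSeq]
          have e : d - 2 + 1 = d - 1 := by ring
          rw [e]; left; rfl
        · rw [hSeq]
          have e : d - 2 + 1 - 1 = d - 2 := by ring
          rw [e]; right; left; rfl
      · exfalso
        apply hnot
        constructor
        · rw [hSeq]
          have e : d - 3 + 1 = d - 2 := by ring
          rw [e]; right; left; rfl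
        · rw [hSeq]
          have e : d - 3 + 1 - 1 = d - 3 := by ring
          rw [e]; right; right; left; rfl
      · exfalso
        apply hnot
        constructor
        · rw [hSeq]
          have e : d - 4 + 1 = d - 3 := by ring
          rw [e]; right; right; left; rfl
        · rw [hSeq]
          have e : d - 4 + 1 - 1 = d - 4 := by ring
          rw [e]; right; right; right; left; rfl
      · exfalso
        apply hnot
        constructor
        · rw [hSeq]
          have e : d - 5 + 1 = d - 4 := by ring
          rw [e]; right; right; right; left; rfl
        · rw [hSeq]
          have e : d - 5 + 1 - 1 = d - 5 := by ring
          rw [e]; right; right; right; right; rfl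
  -- conclude
  have hi1 := hloc i spoke1.symm
  have hi2 := hloc (i + k) spoke2.symm
  rcases hi1 with h1 | h1 <;> rcases hi2 with h2' | h2'
  · exact absurd (h1.trans h2'.symm) hik
  · -- i = d - 5, i + k = d, so k = 5
    have hk5 : (k : ZMod n) = 5 := by linear_combination h2' - h1
    have : ((k:ℕ) : ZMod n) = ((5:ℕ) : ZMod n) := by push_cast; exact hk5
    exact (cast_inj_of_lt (by omega) (by omega)).mp this
  · -- i = d, i + k = d - 5, so k = -5, impossible
    exfalso
    have hk5 : ((k + 5 : ℕ) : ZMod n) = ((0:ℕ) : ZMod n) := by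
      push_cast
      linear_combination h2' - h1
    have := (cast_inj_of_lt (by omega) (by omega)).mp hk5
    omega
  · exact absurd (h1.trans h2'.symm) hik


theorem gp_C5_iff (n k : ℕ) (hn : 80 < n) (hk1 : 1 ≤ k) (hk2 : 2 * k < n) :
    (∃ C : (GP n k).Subgraph, IsNCycle 8 C ∧
        (C.edgeSet ∩ outerEdges n).ncard = 5 ∧
        (C.edgeSet ∩ spokeEdges n).ncard = 2 ∧
        (C.edgeSet ∩ innerEdges n k).ncard = 1) ↔ k = 5 := by
  constructor
  · rintro ⟨C, ⟨hv8, he8, -, hdeg⟩, ho, hs, hi⟩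
    exact forward hn hk1 hk2 C hv8 he8 hdeg ho hs hi
  · rintro rfl
    refine ⟨cyc n hn, ⟨cyc_verts_ncard n hn, ?_, cyc_conn n hn, cyc_deg n hn⟩, ?_, ?_, ?_⟩
    · rw [cyc_edgeSet]
      exact cycE_ncard n hn
    · rw [cyc_edgeSet]
      exact outer_count n hn
    · rw [cyc_edgeSet]
      exact spoke_count n hn
    · rw [cyc_edgeSet]
      exact inner_count n hn
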